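/- For every 0 < κ < 1 and w ≠ 0, the spectral density f_{κ,w} is continuous on ℝ ∖ {−w, w}, and it has power-law singularities of order 1−κ at ±w: lim_{λ→w} |λ−w|^{1−κ}·f_{κ,w}(λ) = c₂(κ)/2 and lim_{λ→−w} |λ+w|^{1−κ}·f_{κ,w}(λ) = c₂(κ)/2. (Content of Remark 6 following Lemma 1.) -/

import Mathlib

open Real MeasureTheory Filter

noncomputable def c1 (k : ℝ) : ℝ := (2:ℝ) ^ ((1 - k)/2) / (Real.sqrt π * Real.Gamma (k/2))

noncomputable def c2 (k : ℝ) : ℝ := 1 / (2 * Real.Gamma k * Real.cos (k * π / 2))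

/-- Modified Bessel function of the second kind:
`K ν z = (1/2) ∫₀^∞ s^(ν−1) exp(−(z/2)(s + 1/s)) ds`. -/
noncomputable def besselK (ν z : ℝ) : ℝ :=
  (1/2) * ∫ s in Set.Ioi (0:ℝ), s ^ (ν - 1) * Real.exp (-(z/2) * (s + 1/s))

/-- The spectral density `f_{κ,w}` of the covariance `cos(wx)/(1+x²)^{κ/2}`. -/
noncomputable def specDen (k w lam : ℝ) : ℝ :=
  (c1 k / 2) * (besselK ((k-1)/2) |lam + w| * |lam + w| ^ ((k-1)/2)
    + besselK ((k-1)/2) |lam - w| * |lam - w| ^ ((k-1)/2))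

section Aux
open Set

noncomputable def Jf (μ z : ℝ) : ℝ :=
  ∫ t in Set.Ioi (0:ℝ), t ^ (μ - 1) * Real.exp (-t - z^2/(4*t))

lemma gammaBound {μ : ℝ} (hμ : 0 < μ) :
    IntegrableOn (fun t : ℝ => t ^ (μ-1) * Real.exp (-t)) (Set.Ioi 0) := by
  simpa [mul_comm] using Real.GammaIntegral_convergent hμ

lemma Jf_meas (μ z : ℝ) : AEStronglyMeasurable
    (fun t : ℝ => t ^ (μ - 1) * Real.exp (-t - z^2/(4*t)))
    (volume.restrict (Set.Ioi 0)) := by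
  apply Measurable.aestronglyMeasurable
  fun_prop

lemma Jf_bound (μ z : ℝ) : ∀ t ∈ Set.Ioi (0:ℝ),
    ‖t ^ (μ - 1) * Real.exp (-t - z^2/(4*t))‖ ≤ t ^ (μ-1) * Real.exp (-t) := by
  intro t ht
  have ht' : (0:ℝ) < t := ht
  rw [Real.norm_eq_abs, abs_mul, abs_of_nonneg (Real.rpow_nonneg ht'.le _),
    abs_of_nonneg (Real.exp_nonneg _)]
  refine mul_le_mul_of_nonneg_left ?_ (Real.rpow_nonneg ht'.le _)
  apply Real.exp_le_exp.2
  have : 0 ≤ z^2/(4*t) := by positivity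
  linarith

lemma Jf_continuous {μ : ℝ} (hμ : 0 < μ) : Continuous (Jf μ) := by
  apply continuous_of_dominated (bound := fun t => t^(μ-1)*Real.exp (-t))
  · exact fun z => Jf_meas μ z
  · exact fun z => (ae_restrict_iff' measurableSet_Ioi).2 (ae_of_all _ (Jf_bound μ z))
  · exact gammaBound hμ
  · refine ae_of_all _ fun t => ?_
    exact continuous_const.mul (Real.continuous_exp.comp
      (continuous_const.sub ((continuous_pow 2).div_const _)))

lemma Jf_zero {μ : ℝ} (hμ : 0 < μ) : Jf μ 0 = Real.Gamma μ := by
  rw [Real.Gamma_eq_integral hμ]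
  refine setIntegral_congr_fun measurableSet_Ioi fun t ht => ?_
  norm_num [mul_comm]

lemma besselK_eq {ν z : ℝ} (hz : 0 < z) :
    besselK ν z = (2:ℝ)^(-ν-1) * z^ν * Jf (-ν) z := by
  have h1 : (∫ s in Ioi (0:ℝ), s ^ (ν-1) * Real.exp (-(z/2) * (s + 1/s)))
      = ∫ u in Ioi (0:ℝ), u ^ (-ν-1) * Real.exp (-(z/2) * (u + 1/u)) := by
    rw [← integral_comp_rpow_Ioi
      (fun s => s ^ (ν-1) * Real.exp (-(z/2) * (s + 1/s))) (p := -1) (by norm_num)]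
    refine setIntegral_congr_fun measurableSet_Ioi fun x hx => ?_
    have hx' : (0:ℝ) < x := hx
    rw [smul_eq_mul, Real.rpow_neg_one, Real.inv_rpow hx'.le, ← Real.rpow_neg hx'.le,
      one_div, inv_inv]
    rw [show ((-1:ℝ) - 1) = (-2:ℝ) by norm_num, abs_neg, abs_one, one_mul,
      show x ^ (-2:ℝ) * (x ^ (-(ν-1)) * Real.exp (-(z/2) * (x⁻¹ + x)))
        = x ^ (-2:ℝ) * x ^ (-(ν-1)) * Real.exp (-(z/2) * (x⁻¹ + x)) by ring,
      ← Real.rpow_add hx']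
    norm_num
    rw [show (-2:ℝ) + (1 - ν) = -ν - 1 by ring]
    ring_nf
  have hb : (0:ℝ) < 2/z := by positivity
  have h2 : (∫ u in Ioi (0:ℝ), u ^ (-ν-1) * Real.exp (-(z/2) * (u + 1/u)))
      = (2/z) * ∫ t in Ioi (0:ℝ), ((2/z)*t) ^ (-ν-1) * Real.exp (-(z/2) * ((2/z)*t + 1/((2/z)*t))) := by
    rw [integral_comp_mul_left_Ioi
      (fun u => u ^ (-ν-1) * Real.exp (-(z/2) * (u + 1/u))) 0 hb, mul_zero, smul_eq_mul]
    field_simp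
  have h3 : (∫ t in Ioi (0:ℝ), ((2/z)*t) ^ (-ν-1) * Real.exp (-(z/2) * ((2/z)*t + 1/((2/z)*t))))
      = (2/z) ^ (-ν-1) * Jf (-ν) z := by
    rw [Jf, ← integral_const_mul]
    refine setIntegral_congr_fun measurableSet_Ioi fun t ht => ?_
    have ht' : (0:ℝ) < t := ht
    rw [Real.mul_rpow hb.le ht'.le]
    rw [show -(z/2) * ((2/z)*t + 1/((2/z)*t)) = -t - z^2/(4*t) by field_simp; ring]
    ring_nf
  rw [besselK, h1, h2, h3]
  have e1 : (2/z) * (2/z) ^ (-ν-1) = (2/z) ^ (-ν) := by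
    nth_rewrite 1 [← Real.rpow_one (2/z)]
    rw [← Real.rpow_add hb]; ring_nf
  have e2 : (2/z : ℝ) ^ (-ν) = 2 ^ (-ν) * z ^ ν := by
    rw [Real.div_rpow two_pos.le hz.le, Real.rpow_neg hz.le, div_eq_mul_inv, inv_inv]
  rw [show (1/2:ℝ) * (2/z * ((2/z)^(-ν-1) * Jf (-ν) z))
      = (2/z * (2/z)^(-ν-1)) * Jf (-ν) z * (1/2) by ring, e1, e2,
    Real.rpow_sub two_pos, Real.rpow_one]
  ring

lemma const_eq {k : ℝ} (hk0 : 0 < k) (hk1 : k < 1) :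
    c1 k / 2 * ((2:ℝ) ^ (-((k-1)/2) - 1) * Real.Gamma (-((k-1)/2))) = c2 k / 2 := by
  have hcos : 0 < Real.cos (k * π / 2) := by
    apply Real.cos_pos_of_mem_Ioo
    constructor
    · nlinarith [Real.pi_pos]
    · nlinarith [Real.pi_pos]
  have hΓk : 0 < Real.Gamma k := Real.Gamma_pos_of_pos hk0
  have hΓ1 : 0 < Real.Gamma (k/2) := Real.Gamma_pos_of_pos (by linarith)
  have hΓ2 : 0 < Real.Gamma ((k+1)/2) := Real.Gamma_pos_of_pos (by linarith)
  have hsπ : 0 < Real.sqrt π := Real.sqrt_pos.2 Real.pi_pos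
  have hA := Real.Gamma_mul_Gamma_add_half (k/2)
  rw [show 2 * (k/2) = k by ring, show k/2 + 1/2 = (k+1)/2 by ring] at hA
  have hB := Real.Gamma_mul_Gamma_one_sub ((1-k)/2)
  rw [show (1:ℝ) - (1-k)/2 = (k+1)/2 by ring,
    show π * ((1-k)/2) = π/2 - k * π / 2 by ring, Real.sin_pi_div_two_sub] at hB
  have hne : -((k-1)/2) = (1-k)/2 := by ring
  rw [hne]
  have hΓ3 : Real.Gamma ((1-k)/2) = π / (Real.cos (k * π / 2) * Real.Gamma ((k+1)/2)) := by
    rw [eq_div_iff (by positivity),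
      show Real.Gamma ((1-k)/2) * (Real.cos (k*π/2) * Real.Gamma ((k+1)/2))
        = (Real.Gamma ((1-k)/2) * Real.Gamma ((k+1)/2)) * Real.cos (k*π/2) by ring, hB]
    field_simp
    exact div_self (by rw [mul_comm π k]; exact hcos.ne')
  have hΓk' : Real.Gamma k = Real.Gamma (k/2) * Real.Gamma ((k+1)/2) / ((2:ℝ)^(1-k) * Real.sqrt π) := by
    have h2 : (0:ℝ) < (2:ℝ)^(1-k) := Real.rpow_pos_of_pos two_pos _
    rw [eq_div_iff (by positivity)]
    linear_combination -hA
  rw [c1, c2, hΓ3, hΓk']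
  have h2a : (2:ℝ) ^ ((1-k)/2) * (2:ℝ) ^ ((1-k-2)/2) = (2:ℝ)^(-k) := by
    rw [← Real.rpow_add two_pos]; ring_nf
  have h2c : (2:ℝ)^(1-k) = 2 * 2^(-k) := by
    rw [show (1:ℝ)-k = 1 + -k by ring, Real.rpow_add two_pos, Real.rpow_one]
  have hππ : Real.sqrt π * Real.sqrt π = π := Real.mul_self_sqrt Real.pi_pos.le
  have h2 : (0:ℝ) < (2:ℝ)^(1-k) := Real.rpow_pos_of_pos two_pos _
  have h2' : (0:ℝ) < (2:ℝ)^(-k) := Real.rpow_pos_of_pos two_pos _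
  rw [h2c]
  field_simp
  linear_combination π * h2a - (2:ℝ)^(-k) * hππ

lemma besselK_abs_continuousAt {k : ℝ} (hk0 : 0 < k) (hk1 : k < 1) {x₀ : ℝ} (hx : x₀ ≠ 0) :
    ContinuousAt (fun x => besselK ((k-1)/2) |x| * |x| ^ ((k-1)/2)) x₀ := by
  set ν := (k-1)/2 with hν
  have hμ : 0 < -ν := by rw [hν]; linarith
  have habs : ContinuousAt (fun x : ℝ => |x|) x₀ := continuous_abs.continuousAt
  have h1 : ContinuousAt (fun x : ℝ => |x| ^ ν) x₀ :=
    (Real.continuousAt_rpow_const _ ν (Or.inl (abs_ne_zero.2 hx))).comp habs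
  have h2 : ContinuousAt (fun x : ℝ => Jf (-ν) |x|) x₀ :=
    ((Jf_continuous hμ).continuousAt).comp habs
  have hg : ContinuousAt (fun x : ℝ => (2:ℝ)^(-ν-1) * |x| ^ ν * Jf (-ν) |x| * |x| ^ ν) x₀ :=
    ((continuousAt_const.mul h1).mul h2).mul h1
  apply hg.congr
  filter_upwards [eventually_ne_nhds hx] with x hx0
  rw [besselK_eq (abs_pos.2 hx0)]

lemma limit_gen {k : ℝ} (hk0 : 0 < k) (hk1 : k < 1) {d : ℝ} (hd : d ≠ 0) (a : ℝ) :
    Tendsto (fun lam : ℝ => |lam - a| ^ (1-k) * ((c1 k / 2) *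
        (besselK ((k-1)/2) |lam - a + d| * |lam - a + d| ^ ((k-1)/2)
          + besselK ((k-1)/2) |lam - a| * |lam - a| ^ ((k-1)/2))))
      (nhdsWithin a {a}ᶜ) (nhds (c2 k / 2)) := by
  set ν := (k-1)/2 with hν
  have hμ : 0 < -ν := by rw [hν]; linarith
  set g : ℝ → ℝ := fun lam => (c1 k / 2) *
    (|lam - a| ^ (1-k) * (besselK ν |lam - a + d| * |lam - a + d| ^ ν)
      + (2:ℝ)^(-ν-1) * Jf (-ν) |lam - a|) with hg
  have hsub : ContinuousAt (fun lam : ℝ => lam - a) a := by fun_prop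
  have T1 : Tendsto (fun lam : ℝ => |lam - a| ^ (1-k)) (nhds a) (nhds 0) := by
    have : ContinuousAt (fun lam : ℝ => |lam - a| ^ (1-k)) a :=
      ((Real.continuousAt_rpow_const _ _ (Or.inr (by linarith))).comp
        continuous_abs.continuousAt).comp hsub
    simpa [Real.zero_rpow (show (1:ℝ) - k ≠ 0 by linarith)] using this.tendsto
  have T2 : ContinuousAt (fun lam : ℝ => besselK ν |lam - a + d| * |lam - a + d| ^ ν) a := by
    have hc : ContinuousAt (fun lam : ℝ => lam - a + d) a := by fun_prop
    have h0 : a - a + d ≠ 0 := by simpa using hd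
    exact ContinuousAt.comp (f := fun lam : ℝ => lam - a + d)
      (g := fun x : ℝ => besselK ν |x| * |x| ^ ν)
      (besselK_abs_continuousAt hk0 hk1 h0) hc
  have T3 : Tendsto (fun lam : ℝ => (2:ℝ)^(-ν-1) * Jf (-ν) |lam - a|) (nhds a)
      (nhds ((2:ℝ)^(-ν-1) * Real.Gamma (-ν))) := by
    have : ContinuousAt (fun lam : ℝ => (2:ℝ)^(-ν-1) * Jf (-ν) |lam - a|) a :=
      continuousAt_const.mul (((Jf_continuous hμ).continuousAt).comp
        (continuous_abs.continuousAt.comp hsub))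
    simpa [Jf_zero hμ] using this.tendsto
  have Tg : Tendsto g (nhds a) (nhds (c2 k / 2)) := by
    have := tendsto_const_nhds (x := c1 k / 2) (f := nhds (a:ℝ)) |>.mul
      ((T1.mul T2.tendsto).add T3)
    rw [zero_mul, zero_add] at this
    have hconst : c1 k / 2 * ((2:ℝ)^(-ν-1) * Real.Gamma (-ν)) = c2 k / 2 := const_eq hk0 hk1
    rwa [hconst] at this
  refine (Tg.mono_left nhdsWithin_le_nhds).congr' ?_
  filter_upwards [self_mem_nhdsWithin] with lam (hlam : lam ≠ a)
  have hz : 0 < |lam - a| := abs_pos.2 (sub_ne_zero.2 hlam)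
  rw [hg]
  simp only
  rw [besselK_eq hz]
  have hpow : |lam - a| ^ (1-k) * (|lam - a| ^ ν * |lam - a| ^ ν) = 1 := by
    rw [← Real.rpow_add hz, ← Real.rpow_add hz,
      show (1-k) + (ν + ν) = 0 by rw [hν]; ring, Real.rpow_zero]
  calc (c1 k / 2) * (|lam - a| ^ (1-k) * (besselK ν |lam - a + d| * |lam - a + d| ^ ν)
        + (2:ℝ)^(-ν-1) * Jf (-ν) |lam - a|)
      = |lam - a| ^ (1-k) * ((c1 k / 2) * (besselK ν |lam - a + d| * |lam - a + d| ^ ν))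
        + (c1 k / 2) * (((2:ℝ)^(-ν-1) * Jf (-ν) |lam - a|)
          * (|lam - a| ^ (1-k) * (|lam - a| ^ ν * |lam - a| ^ ν))) := by rw [hpow]; ring
    _ = |lam - a| ^ (1-k) * ((c1 k / 2) * (besselK ν |lam - a + d| * |lam - a + d| ^ ν
        + (2:ℝ)^(-ν-1) * |lam - a| ^ ν * Jf (-ν) |lam - a| * |lam - a| ^ ν)) := by ring

end Aux

theorem spectral_density_singularities (k w : ℝ) (hk0 : 0 < k) (hk1 : k < 1) (hw : w ≠ 0) :
    ContinuousOn (specDen k w) ({-w, w} : Set ℝ)ᶜ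
    ∧ Filter.Tendsto (fun lam : ℝ => |lam - w| ^ (1-k) * specDen k w lam)
        (nhdsWithin w {w}ᶜ) (nhds (c2 k / 2))
    ∧ Filter.Tendsto (fun lam : ℝ => |lam + w| ^ (1-k) * specDen k w lam)
        (nhdsWithin (-w) {-w}ᶜ) (nhds (c2 k / 2)) := by
  refine ⟨?_, ?_, ?_⟩
  · intro lam hlam
    simp only [Set.mem_compl_iff, Set.mem_insert_iff, Set.mem_singleton_iff, not_or] at hlam
    obtain ⟨h1, h2⟩ := hlam
    have hpw : lam + w ≠ 0 := fun h => h1 (by linarith)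
    have hmw : lam - w ≠ 0 := sub_ne_zero.2 h2
    apply ContinuousAt.continuousWithinAt
    have c1' : ContinuousAt (fun lam : ℝ => besselK ((k-1)/2) |lam + w| * |lam + w| ^ ((k-1)/2)) lam :=
      ContinuousAt.comp (f := fun lam : ℝ => lam + w)
        (g := fun x : ℝ => besselK ((k-1)/2) |x| * |x| ^ ((k-1)/2))
        (besselK_abs_continuousAt hk0 hk1 hpw) (by fun_prop)
    have c2' : ContinuousAt (fun lam : ℝ => besselK ((k-1)/2) |lam - w| * |lam - w| ^ ((k-1)/2)) lam :=
      ContinuousAt.comp (f := fun lam : ℝ => lam - w)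
        (g := fun x : ℝ => besselK ((k-1)/2) |x| * |x| ^ ((k-1)/2))
        (besselK_abs_continuousAt hk0 hk1 hmw) (by fun_prop)
    exact continuousAt_const.mul (c1'.add c2')
  · have h := limit_gen hk0 hk1 (d := 2*w) (by simpa using hw) w
    convert h using 2 with lam
    rw [show lam - w + 2*w = lam + w by ring, specDen]
  · have h := limit_gen hk0 hk1 (d := -(2*w)) (by simpa using hw) (-w)
    convert h using 2 with lam
    rw [show lam - -w + -(2*w) = lam - w by ring, show lam - -w = lam + w by ring, specDen,
      add_comm (besselK ((k-1)/2) |lam + w| * |lam + w| ^ ((k-1)/2))]
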